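/- arXiv:2307.14048 — 2 statements merged into one kernel-verified Lean document; each statement's English description precedes it below -/
import Mathlib

section
/- Let α ≥ 3, let d ≥ max{4α, 2^{12} − 1} with d not of the form 2^r − 1 for any integer r, and set r = ⌊log₂(d+1)⌋. Then for all integers n ≥ 4d + 2^r, g_d(n) ≥ Q_{d−α}^{(1)}(n). -/
namespace GDQaux

def uval (d R m : ℕ) : ℕ :=
  2 * (m / R) * d + (if m % R = R - 1 then 2 * d + 1 else d + 2 ^ (m % R + 6))

def mval (M s : ℕ) : ℕ := if s % M = 1 then 2 * (s / M) - 3 else 2 * (s / M) - 2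

def phi (d R M s : ℕ) : ℕ := uval d R (mval M s)

lemma uval_ge (d R m : ℕ) (hd : 64 ≤ d) : d + 64 ≤ uval d R m := by
  unfold uval
  have h1 : (64:ℕ) = 2 ^ 6 := by norm_num
  have h2 : (2:ℕ) ^ 6 ≤ 2 ^ (m % R + 6) := Nat.pow_le_pow_right (by norm_num) (by omega)
  split <;> omega

lemma uval_mod (d R m : ℕ) (hR : 6 ≤ R) (hpw : 2 ^ (R + 4) * 4 ≤ d) (hd : 0 < d) :
    uval d R m % (2 * d) = (if m % R = R - 1 then 1 else d + 2 ^ (m % R + 6)) := by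
  unfold uval
  have hq : 2 * (m / R) * d = (m / R) * (2 * d) := by ring
  split_ifs with h
  · rw [hq, Nat.add_comm, Nat.add_mul_mod_self_right]
    have h2 : (2 * d + 1) = 1 + 1 * (2 * d) := by ring
    rw [h2, Nat.add_mul_mod_self_right]
    exact Nat.mod_eq_of_lt (by omega)
  · rw [hq, Nat.add_comm, Nat.add_mul_mod_self_right]
    have hm : m % R < R := Nat.mod_lt _ (by omega)
    have h2 : 2 ^ (m % R + 6) ≤ 2 ^ (R + 4) :=
      Nat.pow_le_pow_right (by norm_num) (by omega)
    exact Nat.mod_eq_of_lt (by omega)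

lemma uval_inj (d R : ℕ) (hR : 6 ≤ R) (hpw : 2 ^ (R + 4) * 4 ≤ d) (hd : 64 ≤ d)
    {m m' : ℕ} (h : uval d R m = uval d R m') : m = m' := by
  have hm := congrArg (· % (2 * d)) h
  simp only [uval_mod d R _ hR hpw (by omega)] at hm
  have hq : m = R * (m / R) + m % R := (Nat.div_add_mod m R).symm
  have hq' : m' = R * (m' / R) + m' % R := (Nat.div_add_mod m' R).symm
  have hmlt : m % R < R := Nat.mod_lt _ (by omega)
  have hmlt' : m' % R < R := Nat.mod_lt _ (by omega)
  unfold uval at h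
  split_ifs at hm h with h1 h2 h2
  · have h5 : (m / R) * (2 * d) = (m' / R) * (2 * d) := by linarith [h]
    have hdiv : m / R = m' / R := Nat.eq_of_mul_eq_mul_right (by omega) h5
    rw [hdiv] at hq; omega
  · have h2' : 2 ^ (m' % R + 6) ≥ 2 ^ 6 := Nat.pow_le_pow_right (by norm_num) (by omega)
    omega
  · have h2' : 2 ^ (m % R + 6) ≥ 2 ^ 6 := Nat.pow_le_pow_right (by norm_num) (by omega)
    omega
  · have he : 2 ^ (m % R + 6) = 2 ^ (m' % R + 6) := by omega
    have he' : m % R = m' % R := by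
      have := Nat.pow_right_injective (show 2 ≤ 2 by norm_num) he
      omega
    rw [he] at h
    have h5 : (m / R) * (2 * d) = (m' / R) * (2 * d) := by linarith [h]
    have hdiv : m / R = m' / R := Nat.eq_of_mul_eq_mul_right (by omega) h5
    rw [hdiv, he'] at hq; omega

lemma dom_cases {M s : ℕ} (hM : 3 ≤ M) (hdom : s % M = 1 ∨ (s + 1) % M = 0)
    (hbig : 2 * M ≤ s + 1) :
    (∃ k, 2 ≤ k ∧ s = k * M + 1 ∧ mval M s = 2 * k - 3) ∨
    (∃ k, 2 ≤ k ∧ s + 1 = k * M ∧ mval M s = 2 * k - 4) := by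
  rcases hdom with h | h
  · left
    have hrep : M * (s / M) + s % M = s := Nat.div_add_mod s M
    rw [h] at hrep
    have hcomm : M * (s / M) = s / M * M := Nat.mul_comm _ _
    refine ⟨s / M, ?_, by omega, by unfold mval; rw [if_pos h]⟩
    by_contra hk
    push_neg at hk
    have hle : M * (s / M) ≤ M * 1 := Nat.mul_le_mul_left M (by omega)
    omega
  · right
    obtain ⟨k, hk⟩ := Nat.dvd_of_mod_eq_zero h
    have hk2 : 2 ≤ k := by
      by_contra hkk
      push_neg at hkk
      have hle : M * k ≤ M * 1 := Nat.mul_le_mul_left M (by omega)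
      omega
    have hcomm : M * k = k * M := Nat.mul_comm _ _
    refine ⟨k, hk2, by omega, ?_⟩
    have hmulsucc : M * (k - 1) + M = M * k := by
      rw [← Nat.mul_succ]; congr 1; omega
    have hsM : s = M * (k - 1) + (M - 1) := by omega
    have hmod : s % M = M - 1 := by
      rw [hsM, Nat.mul_add_mod]
      exact Nat.mod_eq_of_lt (by omega)
    have hdivq : s / M = k - 1 := by
      rw [hsM, Nat.mul_add_div (by omega)]
      have : (M - 1) / M = 0 := Nat.div_eq_of_lt (by omega)
      omega
    unfold mval
    rw [if_neg (by omega), hdivq]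
    omega

lemma uval_bound {d R M α k m : ℕ} (hR : 6 ≤ R) (hpw : 2 ^ (R + 4) * 4 ≤ d)
    (hαd : 4 * α ≤ d) (hMd : M + α = d + 3) (hd : 4096 ≤ d)
    (hk : 2 ≤ k) (hm : m + 3 ≤ 2 * k) :
    uval d R m + α + 1 ≤ k * M := by
  have hM4 : 3 * d + 12 ≤ 4 * M := by omega
  have hqrep : R * (m / R) + m % R = m := Nat.div_add_mod m R
  have hmlt : m % R < R := Nat.mod_lt _ (by omega)
  have h6q : 6 * (m / R) ≤ R * (m / R) := Nat.mul_le_mul_right (m / R) hR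
  unfold uval
  split_ifs with hbr
  · have hk4 : 3 * (m / R) + 4 ≤ k := by
      generalize R * (m / R) = t at hqrep h6q
      omega
    have e5 : (3 * (m / R) + 4) * (3 * d + 12)
        = 9 * ((m / R) * d) + 36 * (m / R) + 12 * d + 48 := by ring
    have e6 : k * (4 * M) = 4 * (k * M) := by ring
    have e : 9 * ((m / R) * d) + 36 * (m / R) + 12 * d + 48 ≤ 4 * (k * M) := by
      rw [← e5, ← e6]
      exact le_trans (Nat.mul_le_mul_left _ hM4) (Nat.mul_le_mul_right _ hk4)
    have e7 : 2 * (m / R) * d = 2 * ((m / R) * d) := by ring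
    rw [e7]
    generalize (m / R) * d = p at e ⊢
    generalize k * M = w at e ⊢
    omega
  · have hP : 2 ^ (m % R + 6) ≤ 2 ^ (R + 4) :=
      Nat.pow_le_pow_right (by norm_num) (by omega)
    have hk2' : 3 * (m / R) + 2 ≤ k := by
      generalize R * (m / R) = t at hqrep h6q
      omega
    have e5 : (3 * (m / R) + 2) * (3 * d + 12)
        = 9 * ((m / R) * d) + 36 * (m / R) + 6 * d + 24 := by ring
    have e6 : k * (4 * M) = 4 * (k * M) := by ring
    have e : 9 * ((m / R) * d) + 36 * (m / R) + 6 * d + 24 ≤ 4 * (k * M) := by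
      rw [← e5, ← e6]
      exact le_trans (Nat.mul_le_mul_left _ hM4) (Nat.mul_le_mul_right _ hk2')
    have e7 : 2 * (m / R) * d = 2 * ((m / R) * d) := by ring
    rw [e7]
    generalize (m / R) * d = p at e ⊢
    generalize k * M = w at e ⊢
    omega

lemma phi_le {d R M α s : ℕ} (hR : 6 ≤ R) (hpw : 2 ^ (R + 4) * 4 ≤ d)
    (hαd : 4 * α ≤ d) (hMd : M + α = d + 3) (hd : 4096 ≤ d)
    (hdom : s % M = 1 ∨ (s + 1) % M = 0) (hbig : 2 * M ≤ s + 1) :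
    phi d R M s + α ≤ s := by
  have hM : 3 ≤ M := by omega
  rcases dom_cases hM hdom hbig with ⟨k, hk2, hs, hm⟩ | ⟨k, hk2, hs, hm⟩ <;>
    unfold phi <;> rw [hm]
  · have := uval_bound (m := 2 * k - 3) hR hpw hαd hMd hd hk2 (by omega)
    omega
  · have := uval_bound (m := 2 * k - 4) hR hpw hαd hMd hd hk2 (by omega)
    omega

lemma phi_inj {d R M s s' : ℕ} (hR : 6 ≤ R) (hpw : 2 ^ (R + 4) * 4 ≤ d) (hd : 4096 ≤ d)
    (hM : 3 ≤ M)
    (hdom : s % M = 1 ∨ (s + 1) % M = 0) (hbig : 2 * M ≤ s + 1)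
    (hdom' : s' % M = 1 ∨ (s' + 1) % M = 0) (hbig' : 2 * M ≤ s' + 1)
    (h : phi d R M s = phi d R M s') : s = s' := by
  have huinj := uval_inj d R hR hpw (by omega) h
  rcases dom_cases hM hdom hbig with ⟨k, hk2, hs, hm⟩ | ⟨k, hk2, hs, hm⟩ <;>
    rcases dom_cases hM hdom' hbig' with ⟨k', hk2', hs', hm'⟩ | ⟨k', hk2', hs', hm'⟩ <;>
      rw [hm, hm'] at huinj
  · have hkk : k = k' := by omega
    rw [hs, hs', hkk]
  · omega
  · omega
  · have hkk : k = k' := by omega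
    rw [hkk] at hs
    omega
def bigsOf (M : ℕ) (P : Multiset ℕ) : Multiset ℕ := P.filter (fun x => 2 * M ≤ x + 1)

def coreOf (d R M : ℕ) (P : Multiset ℕ) : Multiset ℕ :=
  Multiset.replicate
      (if P.count (M - 1) % 2 = 1 ∧ P.count (M + 1) % 2 = 1 then 0 else P.count (M - 1) % 2)
      (d + 2)
  + Multiset.replicate
      (if P.count (M - 1) % 2 = 1 ∧ P.count (M + 1) % 2 = 1 then 0 else P.count (M + 1) % 2)
      (d + 4)
  + Multiset.replicate
      (if P.count (M - 1) % 2 = 1 ∧ P.count (M + 1) % 2 = 1 then 1 else 0) (d + 32)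
  + Multiset.replicate (P.count (M - 1) / 2) (d + 8)
  + Multiset.replicate (P.count (M + 1) / 2) (d + 16)
  + (bigsOf M P).map (phi d R M)

def imageOf (d R M n : ℕ) (P : Multiset ℕ) : Multiset ℕ :=
  coreOf d R M P + Multiset.replicate (n - (coreOf d R M P).sum) 1

lemma map_injOn_eq {f : ℕ → ℕ} {s : Multiset ℕ} :
    ∀ {t : Multiset ℕ}, (∀ x ∈ s, ∀ y ∈ t, f x = f y → x = y) →
      s.map f = t.map f → s = t := by
  induction s using Multiset.induction with
  | empty =>
    intro t _ h
    have : t.map f = 0 := by simpa using h.symm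
    simpa using (Multiset.map_eq_zero.mp this).symm
  | cons a s ih =>
    intro t hinj h
    have ha : f a ∈ t.map f := by
      rw [← h]; simp
    obtain ⟨b, hbt, hba⟩ := Multiset.mem_map.mp ha
    have hab : a = b := hinj a (Multiset.mem_cons_self a s) b hbt hba.symm
    subst hab
    have ht : t = a ::ₘ t.erase a := (Multiset.cons_erase hbt).symm
    rw [ht] at h ⊢
    simp only [Multiset.map_cons] at h
    have h' : s.map f = (t.erase a).map f := (Multiset.cons_inj_right _).mp h
    have : s = t.erase a :=
      ih (fun x hx y hy => hinj x (Multiset.mem_cons_of_mem hx) y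
        (by rw [ht]; exact Multiset.mem_cons_of_mem hy)) h'
    rw [this]

lemma classify {M x : ℕ} (hM : 5 ≤ M) (hx : 0 < x) (h : x % M = 1 ∨ (x + 1) % M = 0) :
    x = 1 ∨ x = M - 1 ∨ x = M + 1 ∨ 2 * M ≤ x + 1 := by
  rcases h with h | h
  · have hrep : M * (x / M) + x % M = x := Nat.div_add_mod x M
    rw [h] at hrep
    rcases Nat.lt_or_ge (x / M) 2 with ht | ht
    · interval_cases hxM : (x / M) <;> omega
    · have h2 : M * 2 ≤ M * (x / M) := Nat.mul_le_mul_left M ht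
      omega
  · obtain ⟨k, hk⟩ := Nat.dvd_of_mod_eq_zero h
    rcases Nat.lt_or_ge k 2 with ht | ht
    · interval_cases k <;> omega
    · have h2 : M * 2 ≤ M * k := Nat.mul_le_mul_left M ht
      omega

lemma decomp {M : ℕ} (hM : 5 ≤ M) {P : Multiset ℕ} (hpos : ∀ x ∈ P, 0 < x)
    (hQ : ∀ x ∈ P, x % M = 1 ∨ (x + 1) % M = 0) :
    P = Multiset.replicate (P.count 1) 1 + Multiset.replicate (P.count (M - 1)) (M - 1)
      + Multiset.replicate (P.count (M + 1)) (M + 1) + bigsOf M P := by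
  ext x
  simp only [Multiset.count_add, Multiset.count_replicate, bigsOf, Multiset.count_filter]
  by_cases h1 : x = 1
  · subst h1
    rw [if_pos rfl, if_neg (by omega), if_neg (by omega), if_neg (by omega)]
    omega
  · by_cases h2 : x = M - 1
    · subst h2
      rw [if_neg (by omega), if_pos rfl, if_neg (by omega), if_neg (by omega)]
      omega
    · by_cases h3 : x = M + 1
      · subst h3
        rw [if_neg (by omega), if_neg (by omega), if_pos rfl, if_neg (by omega)]
        omega
      · rw [if_neg (by omega), if_neg (by omega), if_neg (by omega)]
        by_cases h4 : 2 * M ≤ x + 1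
        · rw [if_pos h4]
          omega
        · rw [if_neg h4]
          rw [Multiset.count_eq_zero]
          intro hx
          rcases classify hM (hpos x hx) (hQ x hx) with h | h | h | h <;> omega
lemma mass {d R M α n : ℕ} (hR : 6 ≤ R) (hpw : 2 ^ (R + 4) * 4 ≤ d)
    (hαd : 4 * α ≤ d) (hα3 : 3 ≤ α) (hMd : M + α = d + 3) (hd : 4096 ≤ d)
    (hn : 4 * d ≤ n)
    {P : Multiset ℕ} (hpos : ∀ x ∈ P, 0 < x)
    (hQ : ∀ x ∈ P, x % M = 1 ∨ (x + 1) % M = 0) (hsum : P.sum = n) :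
    (coreOf d R M P).sum ≤ n := by
  have hM : 5 ≤ M := by omega
  -- mass decomposition of P
  have hsum2 : P.count 1 + P.count (M - 1) * (M - 1) + P.count (M + 1) * (M + 1)
      + (bigsOf M P).sum = n := by
    have hdec := decomp hM hpos hQ
    rw [hdec] at hsum
    simp only [Multiset.sum_add, Multiset.sum_replicate, smul_eq_mul, mul_one] at hsum
    omega
  -- each big part shrinks by at least α
  have hble : ∀ x ∈ bigsOf M P, phi d R M x + α ≤ x := by
    intro x hx
    obtain ⟨hxP, hxbig⟩ := Multiset.mem_filter.mp hx
    exact phi_le hR hpw hαd hMd hd (hQ x hxP) hxbig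
  have hmap : ((bigsOf M P).map (phi d R M)).sum + α * (bigsOf M P).card
      ≤ (bigsOf M P).sum := by
    have h1 : ((bigsOf M P).map (fun x => phi d R M x + α)).sum
        ≤ ((bigsOf M P).map id).sum :=
      Multiset.sum_map_le_sum_map _ _ (fun i hi => hble i hi)
    rw [Multiset.map_id] at h1
    rw [Multiset.sum_map_add] at h1
    have h2 : ((bigsOf M P).map (fun x => α)).sum = (bigsOf M P).card * α := by
      rw [Multiset.map_const', Multiset.sum_replicate, smul_eq_mul]
    have h3 : α * (bigsOf M P).card = (bigsOf M P).card * α := Nat.mul_comm _ _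
    omega
  unfold coreOf
  simp only [Multiset.sum_add, Multiset.sum_replicate, smul_eq_mul]
  set a := P.count (M - 1) with ha
  set b := P.count (M + 1) with hb
  set c := P.count 1 with hc
  set Bg := bigsOf M P with hBg
  set mp := (Bg.map (phi d R M)).sum with hmp
  set K := Bg.card with hK
  rcases Nat.mod_two_eq_zero_or_one a with ha2 | ha2 <;>
    rcases Nat.mod_two_eq_zero_or_one b with hb2 | hb2
  · -- (0,0)
    have hcond : ¬(a % 2 = 1 ∧ b % 2 = 1) := by omega
    rw [if_neg hcond, if_neg hcond, if_neg hcond, ha2, hb2]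
    have e1 : a * (M - 1) = (a / 2) * (d + 8) + (a / 2) * (d - 2 * α - 4) := by
      have hA : a = 2 * (a / 2) := by omega
      have h2M : 2 * (M - 1) = (d + 8) + (d - 2 * α - 4) := by omega
      calc a * (M - 1) = (2 * (a / 2)) * (M - 1) := by rw [← hA]
        _ = (a / 2) * (2 * (M - 1)) := by ring
        _ = (a / 2) * ((d + 8) + (d - 2 * α - 4)) := by rw [h2M]
        _ = (a / 2) * (d + 8) + (a / 2) * (d - 2 * α - 4) := by ring
    have e2 : b * (M + 1) = (b / 2) * (d + 16) + (b / 2) * (d - 2 * α - 8) := by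
      have hB : b = 2 * (b / 2) := by omega
      have h2M : 2 * (M + 1) = (d + 16) + (d - 2 * α - 8) := by omega
      calc b * (M + 1) = (2 * (b / 2)) * (M + 1) := by rw [← hB]
        _ = (b / 2) * (2 * (M + 1)) := by ring
        _ = (b / 2) * ((d + 16) + (d - 2 * α - 8)) := by rw [h2M]
        _ = (b / 2) * (d + 16) + (b / 2) * (d - 2 * α - 8) := by ring
    omega
  · -- (0,1)
    have hcond : ¬(a % 2 = 1 ∧ b % 2 = 1) := by omega
    rw [if_neg hcond, if_neg hcond, if_neg hcond, ha2, hb2]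
    have e1 : a * (M - 1) = (a / 2) * (d + 8) + (a / 2) * (d - 2 * α - 4) := by
      have hA : a = 2 * (a / 2) := by omega
      have h2M : 2 * (M - 1) = (d + 8) + (d - 2 * α - 4) := by omega
      calc a * (M - 1) = (2 * (a / 2)) * (M - 1) := by rw [← hA]
        _ = (a / 2) * (2 * (M - 1)) := by ring
        _ = (a / 2) * ((d + 8) + (d - 2 * α - 4)) := by rw [h2M]
        _ = (a / 2) * (d + 8) + (a / 2) * (d - 2 * α - 4) := by ring
    have e2 : b * (M + 1) = (b / 2) * (d + 16) + (b / 2) * (d - 2 * α - 8) + (M + 1) := by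
      have hB : b = 2 * (b / 2) + 1 := by omega
      have h2M : 2 * (M + 1) = (d + 16) + (d - 2 * α - 8) := by omega
      calc b * (M + 1) = (2 * (b / 2) + 1) * (M + 1) := by rw [← hB]
        _ = (b / 2) * (2 * (M + 1)) + (M + 1) := by ring
        _ = (b / 2) * ((d + 16) + (d - 2 * α - 8)) + (M + 1) := by rw [h2M]
        _ = (b / 2) * (d + 16) + (b / 2) * (d - 2 * α - 8) + (M + 1) := by ring
    by_cases hres : a / 2 = 0 ∧ b / 2 = 0 ∧ K = 0 ∧ c < α
    · obtain ⟨hA0, hB0, hK0, hcα⟩ := hres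
      have hBg0 : Bg = 0 := Multiset.card_eq_zero.mp hK0
      have ha0 : a = 0 := by omega
      have hb1 : b = 1 := by omega
      rw [hBg0] at hsum2
      rw [ha0, hb1] at hsum2
      simp only [Multiset.sum_zero, zero_mul, one_mul] at hsum2
      omega
    · have hres' : α ≤ (a / 2) * (d - 2 * α - 4) + (b / 2) * (d - 2 * α - 8)
          + c + α * K := by
        rcases Nat.eq_zero_or_pos (a / 2) with h0 | h0
        · rcases Nat.eq_zero_or_pos (b / 2) with h1 | h1
          · rcases Nat.eq_zero_or_pos K with h3 | h3
            · have hcα : α ≤ c := by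
                rcases Nat.lt_or_ge c α with h5 | h5
                · exact absurd ⟨h0, h1, by omega, h5⟩ hres
                · exact h5
              omega
            · have : α * 1 ≤ α * K := Nat.mul_le_mul_left α h3
              omega
          · have : 1 * (d - 2 * α - 8) ≤ (b / 2) * (d - 2 * α - 8) :=
              Nat.mul_le_mul_right _ h1
            omega
        · have : 1 * (d - 2 * α - 4) ≤ (a / 2) * (d - 2 * α - 4) :=
            Nat.mul_le_mul_right _ h0
          omega
      omega
  · -- (1,0)
    have hcond : ¬(a % 2 = 1 ∧ b % 2 = 1) := by omega
    rw [if_neg hcond, if_neg hcond, if_neg hcond, ha2, hb2]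
    have e1 : a * (M - 1) = (a / 2) * (d + 8) + (a / 2) * (d - 2 * α - 4) + (M - 1) := by
      have hA : a = 2 * (a / 2) + 1 := by omega
      have h2M : 2 * (M - 1) = (d + 8) + (d - 2 * α - 4) := by omega
      calc a * (M - 1) = (2 * (a / 2) + 1) * (M - 1) := by rw [← hA]
        _ = (a / 2) * (2 * (M - 1)) + (M - 1) := by ring
        _ = (a / 2) * ((d + 8) + (d - 2 * α - 4)) + (M - 1) := by rw [h2M]
        _ = (a / 2) * (d + 8) + (a / 2) * (d - 2 * α - 4) + (M - 1) := by ring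
    have e2 : b * (M + 1) = (b / 2) * (d + 16) + (b / 2) * (d - 2 * α - 8) := by
      have hB : b = 2 * (b / 2) := by omega
      have h2M : 2 * (M + 1) = (d + 16) + (d - 2 * α - 8) := by omega
      calc b * (M + 1) = (2 * (b / 2)) * (M + 1) := by rw [← hB]
        _ = (b / 2) * (2 * (M + 1)) := by ring
        _ = (b / 2) * ((d + 16) + (d - 2 * α - 8)) := by rw [h2M]
        _ = (b / 2) * (d + 16) + (b / 2) * (d - 2 * α - 8) := by ring
    by_cases hres : a / 2 = 0 ∧ b / 2 = 0 ∧ K = 0 ∧ c < α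
    · obtain ⟨hA0, hB0, hK0, hcα⟩ := hres
      have hBg0 : Bg = 0 := Multiset.card_eq_zero.mp hK0
      have ha1 : a = 1 := by omega
      have hb0 : b = 0 := by omega
      rw [hBg0] at hsum2
      rw [ha1, hb0] at hsum2
      simp only [Multiset.sum_zero, zero_mul, one_mul] at hsum2
      omega
    · have hres' : α ≤ (a / 2) * (d - 2 * α - 4) + (b / 2) * (d - 2 * α - 8)
          + c + α * K := by
        rcases Nat.eq_zero_or_pos (a / 2) with h0 | h0
        · rcases Nat.eq_zero_or_pos (b / 2) with h1 | h1
          · rcases Nat.eq_zero_or_pos K with h3 | h3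
            · have hcα : α ≤ c := by
                rcases Nat.lt_or_ge c α with h5 | h5
                · exact absurd ⟨h0, h1, by omega, h5⟩ hres
                · exact h5
              omega
            · have : α * 1 ≤ α * K := Nat.mul_le_mul_left α h3
              omega
          · have : 1 * (d - 2 * α - 8) ≤ (b / 2) * (d - 2 * α - 8) :=
              Nat.mul_le_mul_right _ h1
            omega
        · have : 1 * (d - 2 * α - 4) ≤ (a / 2) * (d - 2 * α - 4) :=
            Nat.mul_le_mul_right _ h0
          omega
      omega
  · -- (1,1)
    have hcond : a % 2 = 1 ∧ b % 2 = 1 := ⟨ha2, hb2⟩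
    rw [if_pos hcond, if_pos hcond, if_pos hcond]
    have e1 : a * (M - 1) = (a / 2) * (d + 8) + (a / 2) * (d - 2 * α - 4) + (M - 1) := by
      have hA : a = 2 * (a / 2) + 1 := by omega
      have h2M : 2 * (M - 1) = (d + 8) + (d - 2 * α - 4) := by omega
      calc a * (M - 1) = (2 * (a / 2) + 1) * (M - 1) := by rw [← hA]
        _ = (a / 2) * (2 * (M - 1)) + (M - 1) := by ring
        _ = (a / 2) * ((d + 8) + (d - 2 * α - 4)) + (M - 1) := by rw [h2M]
        _ = (a / 2) * (d + 8) + (a / 2) * (d - 2 * α - 4) + (M - 1) := by ring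
    have e2 : b * (M + 1) = (b / 2) * (d + 16) + (b / 2) * (d - 2 * α - 8) + (M + 1) := by
      have hB : b = 2 * (b / 2) + 1 := by omega
      have h2M : 2 * (M + 1) = (d + 16) + (d - 2 * α - 8) := by omega
      calc b * (M + 1) = (2 * (b / 2) + 1) * (M + 1) := by rw [← hB]
        _ = (b / 2) * (2 * (M + 1)) + (M + 1) := by ring
        _ = (b / 2) * ((d + 16) + (d - 2 * α - 8)) + (M + 1) := by rw [h2M]
        _ = (b / 2) * (d + 16) + (b / 2) * (d - 2 * α - 8) + (M + 1) := by ring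
    omega
lemma image_pos {d R M n : ℕ} (hd : 4096 ≤ d) (P : Multiset ℕ)
    {x : ℕ} (hx : x ∈ imageOf d R M n P) : 0 < x := by
  unfold imageOf coreOf at hx
  simp only [Multiset.mem_add] at hx
  rcases hx with (((((hx | hx) | hx) | hx) | hx) | hx) | hx
  · rw [Multiset.mem_replicate] at hx; omega
  · rw [Multiset.mem_replicate] at hx; omega
  · rw [Multiset.mem_replicate] at hx; omega
  · rw [Multiset.mem_replicate] at hx; omega
  · rw [Multiset.mem_replicate] at hx; omega
  · obtain ⟨s, _, rfl⟩ := Multiset.mem_map.mp hx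
    exact Nat.lt_of_lt_of_le (show 0 < d + 64 by omega) (uval_ge d R (mval M s) (by omega))
  · rw [Multiset.mem_replicate] at hx; omega

lemma image_residue {d R M n : ℕ} (hR : 6 ≤ R) (hpw : 2 ^ (R + 4) * 4 ≤ d)
    (hd : 4096 ≤ d) (P : Multiset ℕ) {x : ℕ} (hx : x ∈ imageOf d R M n P) :
    x % (2 * d) = 1 ∨ ∃ j, 1 ≤ j ∧ j ≤ R + 4 ∧ x % (2 * d) = d + 2 ^ j := by
  unfold imageOf coreOf at hx
  simp only [Multiset.mem_add] at hx
  rcases hx with (((((hx | hx) | hx) | hx) | hx) | hx) | hx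
  · rw [Multiset.mem_replicate] at hx
    exact Or.inr ⟨1, by omega, by omega, by
      rw [hx.2, Nat.mod_eq_of_lt (by omega)]; norm_num⟩
  · rw [Multiset.mem_replicate] at hx
    exact Or.inr ⟨2, by omega, by omega, by
      rw [hx.2, Nat.mod_eq_of_lt (by omega)]; norm_num⟩
  · rw [Multiset.mem_replicate] at hx
    exact Or.inr ⟨5, by omega, by omega, by
      rw [hx.2, Nat.mod_eq_of_lt (by omega)]; norm_num⟩
  · rw [Multiset.mem_replicate] at hx
    exact Or.inr ⟨3, by omega, by omega, by
      rw [hx.2, Nat.mod_eq_of_lt (by omega)]; norm_num⟩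
  · rw [Multiset.mem_replicate] at hx
    exact Or.inr ⟨4, by omega, by omega, by
      rw [hx.2, Nat.mod_eq_of_lt (by omega)]; norm_num⟩
  · obtain ⟨s, _, rfl⟩ := Multiset.mem_map.mp hx
    unfold phi
    rw [uval_mod d R _ hR hpw (by omega)]
    set m := mval M s with hm
    have hmlt : m % R < R := Nat.mod_lt _ (by omega)
    split_ifs with hbr
    · left; rfl
    · right
      exact ⟨m % R + 6, by omega, by omega, rfl⟩
  · rw [Multiset.mem_replicate] at hx
    rw [hx.2]
    left; exact Nat.mod_eq_of_lt (by omega)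

lemma image_counts {d R M n : ℕ} (hd : 4096 ≤ d) (hM : 5 ≤ M) (Q : Multiset ℕ) :
    (Multiset.count (d+2) (imageOf d R M n Q) + Multiset.count (d+32) (imageOf d R M n Q)
        = Q.count (M-1) % 2)
    ∧ (Multiset.count (d+4) (imageOf d R M n Q) + Multiset.count (d+32) (imageOf d R M n Q)
        = Q.count (M+1) % 2)
    ∧ (Multiset.count (d+8) (imageOf d R M n Q) = Q.count (M-1) / 2)
    ∧ (Multiset.count (d+16) (imageOf d R M n Q) = Q.count (M+1) / 2)
    ∧ (∀ v, d + 64 ≤ v → Multiset.count v (imageOf d R M n Q)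
        = Multiset.count v ((bigsOf M Q).map (phi d R M))) := by
  have hm0 : ∀ v, v < d + 64 → Multiset.count v ((bigsOf M Q).map (phi d R M)) = 0 := by
    intro v hv
    rw [Multiset.count_eq_zero]
    intro hy
    obtain ⟨s, _, rfl⟩ := Multiset.mem_map.mp hy
    have hphi : d + 64 ≤ phi d R M s := uval_ge d R (mval M s) (by omega)
    omega
  refine ⟨?_, ?_, ?_, ?_, ?_⟩
  · unfold imageOf coreOf
    simp only [Multiset.count_add, Multiset.count_replicate,
      hm0 (d+2) (by omega), hm0 (d+32) (by omega), if_true]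
    rw [if_neg (by omega : ¬(d+4 = d+2)), if_neg (by omega : ¬(d+32 = d+2)),
      if_neg (by omega : ¬(d+8 = d+2)), if_neg (by omega : ¬(d+16 = d+2)),
      if_neg (by omega : ¬((1:ℕ) = d+2)),
      if_neg (by omega : ¬(d+2 = d+32)), if_neg (by omega : ¬(d+4 = d+32)),
      if_neg (by omega : ¬(d+8 = d+32)), if_neg (by omega : ¬(d+16 = d+32)),
      if_neg (by omega : ¬((1:ℕ) = d+32))]
    split_ifs <;> omega
  · unfold imageOf coreOf
    simp only [Multiset.count_add, Multiset.count_replicate,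
      hm0 (d+4) (by omega), hm0 (d+32) (by omega), if_true]
    rw [if_neg (by omega : ¬(d+2 = d+4)), if_neg (by omega : ¬(d+32 = d+4)),
      if_neg (by omega : ¬(d+8 = d+4)), if_neg (by omega : ¬(d+16 = d+4)),
      if_neg (by omega : ¬((1:ℕ) = d+4)),
      if_neg (by omega : ¬(d+2 = d+32)), if_neg (by omega : ¬(d+4 = d+32)),
      if_neg (by omega : ¬(d+8 = d+32)), if_neg (by omega : ¬(d+16 = d+32)),
      if_neg (by omega : ¬((1:ℕ) = d+32))]
    split_ifs <;> omega
  · unfold imageOf coreOf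
    simp only [Multiset.count_add, Multiset.count_replicate, hm0 (d+8) (by omega), if_true]
    rw [if_neg (by omega : ¬(d+2 = d+8)), if_neg (by omega : ¬(d+4 = d+8)),
      if_neg (by omega : ¬(d+32 = d+8)),
      if_neg (by omega : ¬(d+16 = d+8)), if_neg (by omega : ¬((1:ℕ) = d+8))]
    omega
  · unfold imageOf coreOf
    simp only [Multiset.count_add, Multiset.count_replicate, hm0 (d+16) (by omega), if_true]
    rw [if_neg (by omega : ¬(d+2 = d+16)), if_neg (by omega : ¬(d+4 = d+16)),
      if_neg (by omega : ¬(d+32 = d+16)), if_neg (by omega : ¬(d+8 = d+16)),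
      if_neg (by omega : ¬((1:ℕ) = d+16))]
    omega
  · intro v hv
    unfold imageOf coreOf
    simp only [Multiset.count_add, Multiset.count_replicate]
    rw [if_neg (by omega : ¬(d+2 = v)), if_neg (by omega : ¬(d+4 = v)),
      if_neg (by omega : ¬(d+32 = v)), if_neg (by omega : ¬(d+8 = v)),
      if_neg (by omega : ¬(d+16 = v)), if_neg (by omega : ¬((1:ℕ) = v))]
    omega

lemma image_inj {d R M α n : ℕ} (hR : 6 ≤ R) (hpw : 2 ^ (R + 4) * 4 ≤ d)
    (hαd : 4 * α ≤ d) (hα3 : 3 ≤ α) (hMd : M + α = d + 3) (hd : 4096 ≤ d)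
    {P P' : Multiset ℕ} (hpos : ∀ x ∈ P, 0 < x)
    (hQ : ∀ x ∈ P, x % M = 1 ∨ (x + 1) % M = 0) (hsum : P.sum = n)
    (hpos' : ∀ x ∈ P', 0 < x)
    (hQ' : ∀ x ∈ P', x % M = 1 ∨ (x + 1) % M = 0) (hsum' : P'.sum = n)
    (h : imageOf d R M n P = imageOf d R M n P') : P = P' := by
  have hM : 5 ≤ M := by omega
  obtain ⟨e1, e2, e3, e4, e5⟩ := image_counts (n := n) (R := R) hd hM P
  obtain ⟨f1, f2, f3, f4, f5⟩ := image_counts (n := n) (R := R) hd hM P'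
  rw [h] at e1 e2 e3 e4 e5
  have haa : P.count (M-1) = P'.count (M-1) := by omega
  have hbb : P.count (M+1) = P'.count (M+1) := by omega
  have hmapeq : (bigsOf M P).map (phi d R M) = (bigsOf M P').map (phi d R M) := by
    ext v
    rcases Nat.lt_or_ge v (d + 64) with hv | hv
    · have hz : ∀ (S : Multiset ℕ), Multiset.count v ((bigsOf M S).map (phi d R M)) = 0 := by
        intro S
        rw [Multiset.count_eq_zero]
        intro hy
        obtain ⟨s, _, rfl⟩ := Multiset.mem_map.mp hy
        have hphi : d + 64 ≤ phi d R M s := uval_ge d R (mval M s) (by omega)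
        omega
      rw [hz, hz]
    · rw [← e5 v hv, f5 v hv]
  have hBgeq : bigsOf M P = bigsOf M P' := by
    refine map_injOn_eq ?_ hmapeq
    intro x hx y hy hxy
    obtain ⟨hxP, hxbig⟩ := Multiset.mem_filter.mp hx
    obtain ⟨hyP, hybig⟩ := Multiset.mem_filter.mp hy
    exact phi_inj hR hpw hd (by omega) (hQ x hxP) hxbig (hQ' y hyP) hybig hxy
  have hsum2 : P.count 1 + P.count (M-1) * (M - 1) + P.count (M+1) * (M + 1)
      + (bigsOf M P).sum = n := by
    have hdec := decomp hM hpos hQ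
    rw [hdec] at hsum
    simp only [Multiset.sum_add, Multiset.sum_replicate, smul_eq_mul, mul_one] at hsum
    omega
  have hsum2' : P'.count 1 + P'.count (M-1) * (M - 1) + P'.count (M+1) * (M + 1)
      + (bigsOf M P').sum = n := by
    have hdec := decomp hM hpos' hQ'
    rw [hdec] at hsum'
    simp only [Multiset.sum_add, Multiset.sum_replicate, smul_eq_mul, mul_one] at hsum'
    omega
  rw [← haa, ← hbb, ← hBgeq] at hsum2'
  have hc : P.count 1 = P'.count 1 := by omega
  rw [decomp hM hpos hQ, decomp hM hpos' hQ', haa, hbb, hBgeq, hc]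
lemma image_sum {d R M α n : ℕ} (hR : 6 ≤ R) (hpw : 2 ^ (R + 4) * 4 ≤ d)
    (hαd : 4 * α ≤ d) (hα3 : 3 ≤ α) (hMd : M + α = d + 3) (hd : 4096 ≤ d)
    (hn : 4 * d ≤ n) {P : Multiset ℕ} (hpos : ∀ x ∈ P, 0 < x)
    (hQ : ∀ x ∈ P, x % M = 1 ∨ (x + 1) % M = 0) (hsum : P.sum = n) :
    (imageOf d R M n P).sum = n := by
  have hm := mass hR hpw hαd hα3 hMd hd hn hpos hQ hsum
  unfold imageOf
  rw [Multiset.sum_add, Multiset.sum_replicate, smul_eq_mul, mul_one]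
  omega

def encItem (d R M α n : ℕ) (hR : 6 ≤ R) (hpw : 2 ^ (R + 4) * 4 ≤ d)
    (hαd : 4 * α ≤ d) (hα3 : 3 ≤ α) (hMd : M + α = d + 3) (hd : 4096 ≤ d)
    (hn : 4 * d ≤ n) (p : n.Partition)
    (hp : ∀ x ∈ p.parts, x % M = 1 ∨ (x + 1) % M = 0) : n.Partition where
  parts := imageOf d R M n p.parts
  parts_pos := fun hx => image_pos hd p.parts hx
  parts_sum := image_sum hR hpw hαd hα3 hMd hd hn
    (fun x hx => p.parts_pos hx) hp p.parts_sum

lemma encItem_parts (d R M α n : ℕ) (hR : 6 ≤ R) (hpw : 2 ^ (R + 4) * 4 ≤ d)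
    (hαd : 4 * α ≤ d) (hα3 : 3 ≤ α) (hMd : M + α = d + 3) (hd : 4096 ≤ d)
    (hn : 4 * d ≤ n) (p : n.Partition)
    (hp : ∀ x ∈ p.parts, x % M = 1 ∨ (x + 1) % M = 0) :
    (encItem d R M α n hR hpw hαd hα3 hMd hd hn p hp).parts = imageOf d R M n p.parts :=
  rfl

lemma image_g {d R M n r : ℕ} (hR : 6 ≤ R) (hpw : 2 ^ (R + 4) * 4 ≤ d)
    (hd : 4096 ≤ d) (hrR : R + 6 = r) (P : Multiset ℕ) :
    (∀ x ∈ imageOf d R M n P, x % (2 * d) = 1 ∨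
        (∃ j, 1 ≤ j ∧ j ≤ r - 2 ∧ x % (2 * d) = d + 2 ^ j) ∨
        x % (2 * d) = d + 2 ^ (r - 1)) ∧
    ∀ x ∈ imageOf d R M n P, x % (2 * d) = d + 2 ^ (r - 1) →
      (imageOf d R M n P).count x ≤ 1 := by
  constructor
  · intro x hx
    rcases image_residue hR hpw hd P hx with h | ⟨j, hj1, hj2, hj⟩
    · exact Or.inl h
    · exact Or.inr (Or.inl ⟨j, hj1, by omega, hj⟩)
  · intro x hx hxr
    exfalso
    have hone : 1 ≤ 2 ^ (r - 1) := Nat.one_le_two_pow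
    rcases image_residue hR hpw hd P hx with h | ⟨j, hj1, hj2, hj⟩
    · omega
    · have hpow : (2:ℕ) ^ j = 2 ^ (r - 1) := by omega
      have : j = r - 1 := Nat.pow_right_injective (le_refl 2) hpow
      omega

end GDQaux

/-- `QNum b d n` is the number of partitions of `n` into parts congruent to
`b` or `-b` modulo `d + 3`. -/
noncomputable def QNum (b d n : ℕ) : ℕ :=
  Nat.card {p : n.Partition //
    ∀ x ∈ p.parts, x % (d + 3) = b % (d + 3) ∨ (x + b) % (d + 3) = 0}

/-- `gNum d n`: with `r = ⌊log₂ (d+1)⌋`, the number of partitions of `n` into parts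
congruent to one of `1, d+2, d+4, d+8, …, d+2^(r-2)` modulo `2d`, in which additionally
parts congruent to `d + 2^(r-1)` modulo `2d` may appear, each such part at most once. -/
noncomputable def gNum (d n : ℕ) : ℕ :=
  Nat.card {p : n.Partition //
    (∀ x ∈ p.parts, x % (2 * d) = 1 ∨
      (∃ j, 1 ≤ j ∧ j ≤ Nat.log 2 (d + 1) - 2 ∧ x % (2 * d) = d + 2 ^ j) ∨
      x % (2 * d) = d + 2 ^ (Nat.log 2 (d + 1) - 1)) ∧
    ∀ x ∈ p.parts, x % (2 * d) = d + 2 ^ (Nat.log 2 (d + 1) - 1) → p.parts.count x ≤ 1}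

theorem g_dominates_Q_general (α d n : ℕ) (hα : 3 ≤ α)
    (hd : max (4 * α) (2 ^ 12 - 1) ≤ d) (hpow : ∀ r : ℕ, d ≠ 2 ^ r - 1)
    (hn : 4 * d + 2 ^ (Nat.log 2 (d + 1)) ≤ n) :
    QNum 1 (d - α) n ≤ gNum d n := by
  have hd4α : 4 * α ≤ d := le_trans (le_max_left _ _) hd
  have hd4095 : 4095 ≤ d := by
    have h := le_trans (le_max_right (4 * α) (2 ^ 12 - 1)) hd
    norm_num at h
    omega
  have hd4096 : 4096 ≤ d := by
    have h12 := hpow 12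
    norm_num at h12
    omega
  have hr12 : 12 ≤ Nat.log 2 (d + 1) := by
    have h1 : 2 ^ 12 ≤ d + 1 := by norm_num; omega
    exact (Nat.le_log_iff_pow_le (by norm_num) (by omega)).mpr h1
  have h2r1 : 2 ^ Nat.log 2 (d + 1) ≤ d + 1 := Nat.pow_log_le_self 2 (by omega)
  have h2rpos : 0 < 2 ^ Nat.log 2 (d + 1) := pow_pos (by norm_num) _
  have h2r : 2 ^ Nat.log 2 (d + 1) ≤ d := by
    have hne := hpow (Nat.log 2 (d + 1))
    omega
  have hMd : (d - α + 3) + α = d + 3 := by omega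
  have hR6 : 6 ≤ Nat.log 2 (d + 1) - 6 := by omega
  have hpw : 2 ^ ((Nat.log 2 (d + 1) - 6) + 4) * 4 ≤ d := by
    have hre : (Nat.log 2 (d + 1) - 6) + 4 + 2 = Nat.log 2 (d + 1) := by omega
    have h4 : 2 ^ ((Nat.log 2 (d + 1) - 6) + 4) * 4
        = 2 ^ ((Nat.log 2 (d + 1) - 6) + 4 + 2) := by ring
    rw [h4, hre]
    exact h2r
  have hmodM : (1 : ℕ) % (d - α + 3) = 1 := Nat.mod_eq_of_lt (by omega)
  have hn4 : 4 * d ≤ n := by omega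
  rw [QNum, gNum]
  refine Nat.card_le_card_of_injective
    (fun q => ⟨GDQaux.encItem d (Nat.log 2 (d + 1) - 6) (d - α + 3) α n hR6 hpw hd4α hα
        hMd hd4096 hn4 q.1
        (fun x hx => by have h := q.2 x hx; rwa [hmodM] at h),
      by
        have hg := GDQaux.image_g (n := n) (M := d - α + 3) (r := Nat.log 2 (d + 1)) hR6 hpw hd4096
          (by omega) q.1.parts
        exact hg⟩) ?_
  intro q q' hqq
  simp only [Subtype.mk.injEq] at hqq
  have h2 := congrArg Nat.Partition.parts (Subtype.mk.inj hqq)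
  rw [GDQaux.encItem_parts, GDQaux.encItem_parts] at h2
  have hPeq : q.1.parts = q'.1.parts := by
    refine GDQaux.image_inj hR6 hpw hd4α hα hMd hd4096
      (fun x hx => q.1.parts_pos hx)
      (fun x hx => by have h := q.2 x hx; rwa [hmodM] at h)
      q.1.parts_sum
      (fun x hx => q'.1.parts_pos hx)
      (fun x hx => by have h := q'.2 x hx; rwa [hmodM] at h)
      q'.1.parts_sum
      h2
  exact Subtype.ext (Nat.Partition.ext hPeq)
end

section
/- Let d ≥ 3 be an integer. For every integer n with d+4 ≤ n ≤ 3d+2, the number of partitions of n into parts whose pairwise differences are at least d equals 1 + ⌊(n−d)/2⌋; explicitly, the partitions counted are (n) together with (n−y, y) for 1 ≤ y ≤ ⌊(n−d)/2⌋. -/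
/-- `qNum a d n` is the number of partitions of `n` into parts each at least `a`
in which any two parts differ by at least `d`. -/
noncomputable def qNum (a d n : ℕ) : ℕ :=
  Nat.card {p : n.Partition //
    (∀ x ∈ p.parts, a ≤ x) ∧
    p.parts.Pairwise (fun x y => d ≤ max x y - min x y)}

def part1 (n : ℕ) (hn : 0 < n) : n.Partition :=
  ⟨{n}, by intro i hi; simp at hi; omega, by simp⟩

def part2 (n k : ℕ) (h1 : 0 < k) (h2 : 2 * k < n) : n.Partition :=
  ⟨{n - k, k}, by intro i hi; simp at hi; omega, by simp; omega⟩

theorem count_two_part_range (d n : ℕ) (hd : 3 ≤ d) (h1 : d + 4 ≤ n)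
    (h2 : n ≤ 3 * d + 2) :
    qNum 1 d n = 1 + (n - d) / 2 := by
  classical
  rw [qNum]
  set m := (n - d) / 2 with hm
  have hm2 : 2 * m ≤ n - d := by omega
  set S := {p : n.Partition //
    (∀ x ∈ p.parts, 1 ≤ x) ∧
    p.parts.Pairwise (fun x y => d ≤ max x y - min x y)} with hS
  let f : Fin (1 + m) → S := fun k =>
    if hk : (k : ℕ) = 0 then
      ⟨part1 n (by omega), by
        constructor
        · intro x hx; simp [part1] at hx; omega
        · exact ⟨[n], by simp [part1], List.pairwise_singleton _ _⟩⟩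
    else
      ⟨part2 n k (by omega) (by have := k.isLt; omega), by
        have hkm : (k : ℕ) ≤ m := by have := k.isLt; omega
        constructor
        · intro x hx; simp [part2] at hx; omega
        · exact ⟨[n - ↑k, ↑k], by simp [part2]; rfl, by
            simp [List.pairwise_cons]
            omega⟩⟩
  have hbij : Function.Bijective f := by
    constructor
    · intro k1 k2 h
      have hp : (f k1).1.parts = (f k2).1.parts := by rw [h]
      have hk1m : (k1 : ℕ) ≤ m := by have := k1.isLt; omega
      have hk2m : (k2 : ℕ) ≤ m := by have := k2.isLt; omega
      by_cases h1' : (k1 : ℕ) = 0 <;> by_cases h2' : (k2 : ℕ) = 0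
      · exact Fin.ext (by omega)
      · simp only [f, dif_pos h1', dif_neg h2', part1, part2] at hp
        have := congrArg Multiset.card hp
        simp at this
      · simp only [f, dif_neg h1', dif_pos h2', part1, part2] at hp
        have := congrArg Multiset.card hp
        simp at this
      · simp only [f, dif_neg h1', dif_neg h2', part1, part2] at hp
        have hmem : (k1 : ℕ) ∈ ({n - (k2:ℕ), (k2:ℕ)} : Multiset ℕ) := by
          rw [← hp]; simp
        simp at hmem
        rcases hmem with h' | h'
        · omega
        · exact Fin.ext h'
    · rintro ⟨p, hpos, hpair⟩
      obtain ⟨l, hl, hlp⟩ := hpair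
      have hsum : p.parts.sum = n := p.parts_sum
      rw [hl] at hsum
      simp at hsum
      match l, hl, hlp, hsum with
      | [], hl, hlp, hsum => simp at hsum; omega
      | [x], hl, hlp, hsum =>
        refine ⟨⟨0, by omega⟩, ?_⟩
        apply Subtype.ext
        apply Nat.Partition.ext
        simp only [f, dif_pos rfl, part1]
        rw [hl]
        simp at hsum
        simp [hsum]
      | [x, y], hl, hlp, hsum =>
        have hx : 1 ≤ x := hpos x (by rw [hl]; simp)
        have hy : 1 ≤ y := hpos y (by rw [hl]; simp)
        have hr : d ≤ max x y - min x y := by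
          simp [List.pairwise_cons] at hlp; exact hlp
        simp at hsum
        have hkm : min x y ≤ m := by omega
        have hk0 : (min x y) ≠ 0 := by omega
        refine ⟨⟨min x y, by omega⟩, ?_⟩
        apply Subtype.ext
        apply Nat.Partition.ext
        simp only [f, dif_neg hk0, part2]
        rw [hl]
        have : n - min x y = max x y := by omega
        rw [this]
        rcases le_total x y with h' | h'
        · simp [max_eq_right h', min_eq_left h']
          exact Multiset.cons_swap _ _ _
        · simp [max_eq_left h', min_eq_right h']
          rfl
      | x :: y :: z :: t, hl, hlp, hsum =>
        exfalso
        have hx : 1 ≤ x := hpos x (by rw [hl]; simp)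
        have hy : 1 ≤ y := hpos y (by rw [hl]; simp)
        have hz : 1 ≤ z := hpos z (by rw [hl]; simp)
        simp [List.pairwise_cons] at hlp
        obtain ⟨⟨hxy, hxz, -⟩, ⟨hyz, -⟩, -⟩ := hlp
        have ht : 0 ≤ t.sum := Nat.zero_le _
        simp at hsum
        omega
  rw [← Nat.card_eq_of_bijective f hbij]
  simp
end
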